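/- Let K be a field of characteristic zero and n, m ∈ ℕ. If F₁, …, F_r are pairwise non-isomorphic bipartite multigraphs without isolated vertices, each with at most n left vertices and at most m right vertices, then the polynomials hom_{F₁,n,m}, …, hom_{F_r,n,m} ∈ K[X_{n,m}] are linearly independent. -/

import Mathlib

/-- A bipartite multigraph: finite vertex sets `A`, `B` and a multiset of edges. -/
structure BipartiteMultigraph where
  A : Type
  B : Type
  [fintypeA : Fintype A]
  [fintypeB : Fintype B]
  [decA : DecidableEq A]
  [decB : DecidableEq B]
  edges : Multiset (A × B)

attribute [instance] BipartiteMultigraph.fintypeA BipartiteMultigraph.fintypeB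
  BipartiteMultigraph.decA BipartiteMultigraph.decB

/-- The homomorphism polynomial `hom_{F,n,m} = Σ_{h : A → [n], B → [m]} Π_{ab ∈ E(F)} x_{h(a),h(b)}`
in the variables `X_{n,m} = {x_{i,j} : i ∈ [n], j ∈ [m]}`. -/
noncomputable def homPoly (K : Type) [CommSemiring K] (F : BipartiteMultigraph) (n m : ℕ) :
    MvPolynomial (Fin n × Fin m) K :=
  ∑ f : F.A → Fin n, ∑ g : F.B → Fin m,
    (F.edges.map fun e => MvPolynomial.X (f e.1, g e.2)).prod

/-- Isomorphism of bipartite multigraphs: bijections of the two sides of the bipartition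
carrying the edge multiset of one graph to that of the other (preserving multiplicities). -/
def BMGIso (F G : BipartiteMultigraph) : Prop :=
  ∃ (eA : F.A ≃ G.A) (eB : F.B ≃ G.B),
    F.edges.map (Prod.map eA eB) = G.edges

/-- `F` has no isolated vertices. -/
def NoIsolatedVertices (F : BipartiteMultigraph) : Prop :=
  (∀ a : F.A, ∃ e ∈ F.edges, e.1 = a) ∧ (∀ b : F.B, ∃ e ∈ F.edges, e.2 = b)

open MvPolynomial

private lemma prod_X_map {σ K : Type} [CommSemiring K] [DecidableEq σ] (s : Multiset σ) :
    (s.map (X : σ → MvPolynomial σ K)).prod = monomial s.toFinsupp 1 := by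
  induction s using Multiset.induction_on with
  | empty => simp
  | cons a s ih =>
      have : (a ::ₘ s) = {a} + s := by simp [Multiset.singleton_add]
      rw [this, Multiset.map_add, Multiset.prod_add, ih, Multiset.toFinsupp_add,
        Multiset.toFinsupp_singleton, Multiset.map_singleton, Multiset.prod_singleton,
        X, monomial_mul, one_mul]

private lemma coeff_homPoly (K : Type) [CommSemiring K] (F : BipartiteMultigraph) (n m : ℕ)
    (D : Multiset (Fin n × Fin m)) :
    MvPolynomial.coeff D.toFinsupp (homPoly K F n m) =
      ((Finset.univ.filter fun fg : (F.A → Fin n) × (F.B → Fin m) =>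
        F.edges.map (fun e => (fg.1 e.1, fg.2 e.2)) = D).card : K) := by
  classical
  rw [homPoly]
  have hrhs : ((Finset.univ.filter fun fg : (F.A → Fin n) × (F.B → Fin m) =>
        F.edges.map (fun e => (fg.1 e.1, fg.2 e.2)) = D).card : K)
      = ∑ f : F.A → Fin n, ∑ g : F.B → Fin m,
          if F.edges.map (fun e => (f e.1, g e.2)) = D then (1:K) else 0 := by
    rw [← Finset.sum_boole, Fintype.sum_prod_type]
  rw [hrhs]
  simp only [coeff_sum]
  refine Finset.sum_congr rfl fun f _ => Finset.sum_congr rfl fun g _ => ?_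
  have hmap : (F.edges.map fun e => (X (f e.1, g e.2) : MvPolynomial (Fin n × Fin m) K))
      = (F.edges.map fun e => (f e.1, g e.2)).map X := by
    rw [Multiset.map_map]; rfl
  rw [hmap, prod_X_map, coeff_monomial]
  have : Multiset.toFinsupp (F.edges.map fun e => (f e.1, g e.2)) = D.toFinsupp ↔
      (F.edges.map fun e => (f e.1, g e.2)) = D := Multiset.toFinsupp.apply_eq_iff_eq
  split_ifs with h1 h2 h2 <;> simp_all

private lemma key_iso {n m : ℕ} (G H : BipartiteMultigraph)
    (hG : NoIsolatedVertices G) (hH : NoIsolatedVertices H)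
    (hc : Fintype.card H.A + Fintype.card H.B ≤ Fintype.card G.A + Fintype.card G.B)
    (f₀ : G.A → Fin n) (g₀ : G.B → Fin m)
    (hf₀ : Function.Injective f₀) (hg₀ : Function.Injective g₀)
    (f : H.A → Fin n) (g : H.B → Fin m)
    (heq : H.edges.map (fun e => (f e.1, g e.2)) = G.edges.map (fun e => (f₀ e.1, g₀ e.2))) :
    BMGIso H G := by
  classical
  -- equal images on the A side
  have himgA : Finset.image f Finset.univ = Finset.image f₀ Finset.univ := by
    ext x
    simp only [Finset.mem_image, Finset.mem_univ, true_and]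
    constructor
    · rintro ⟨a, rfl⟩
      obtain ⟨e, he, he1⟩ := hH.1 a
      have hmem : (f a, g e.2) ∈ H.edges.map (fun e => (f e.1, g e.2)) := by
        rw [Multiset.mem_map]; exact ⟨e, he, by rw [he1]⟩
      rw [heq, Multiset.mem_map] at hmem
      obtain ⟨e', _, he'⟩ := hmem
      exact ⟨e'.1, (congrArg Prod.fst he')⟩
    · rintro ⟨a, rfl⟩
      obtain ⟨e, he, he1⟩ := hG.1 a
      have hmem : (f₀ a, g₀ e.2) ∈ G.edges.map (fun e => (f₀ e.1, g₀ e.2)) := by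
        rw [Multiset.mem_map]; exact ⟨e, he, by rw [he1]⟩
      rw [← heq, Multiset.mem_map] at hmem
      obtain ⟨e', _, he'⟩ := hmem
      exact ⟨e'.1, (congrArg Prod.fst he')⟩
  have himgB : Finset.image g Finset.univ = Finset.image g₀ Finset.univ := by
    ext x
    simp only [Finset.mem_image, Finset.mem_univ, true_and]
    constructor
    · rintro ⟨b, rfl⟩
      obtain ⟨e, he, he2⟩ := hH.2 b
      have hmem : (f e.1, g b) ∈ H.edges.map (fun e => (f e.1, g e.2)) := by
        rw [Multiset.mem_map]; exact ⟨e, he, by rw [he2]⟩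
      rw [heq, Multiset.mem_map] at hmem
      obtain ⟨e', _, he'⟩ := hmem
      exact ⟨e'.2, (congrArg Prod.snd he')⟩
    · rintro ⟨b, rfl⟩
      obtain ⟨e, he, he2⟩ := hG.2 b
      have hmem : (f₀ e.1, g₀ b) ∈ G.edges.map (fun e => (f₀ e.1, g₀ e.2)) := by
        rw [Multiset.mem_map]; exact ⟨e, he, by rw [he2]⟩
      rw [← heq, Multiset.mem_map] at hmem
      obtain ⟨e', _, he'⟩ := hmem
      exact ⟨e'.2, (congrArg Prod.snd he')⟩
  -- cardinalities
  have hcA : (Finset.image f Finset.univ).card = Fintype.card G.A := by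
    rw [himgA, Finset.card_image_of_injective _ hf₀, Finset.card_univ]
  have hcB : (Finset.image g Finset.univ).card = Fintype.card G.B := by
    rw [himgB, Finset.card_image_of_injective _ hg₀, Finset.card_univ]
  have hA_le : Fintype.card G.A ≤ Fintype.card H.A :=
    calc Fintype.card G.A = (Finset.univ.image f).card := hcA.symm
      _ ≤ (Finset.univ : Finset H.A).card := Finset.card_image_le
      _ = Fintype.card H.A := Finset.card_univ
  have hB_le : Fintype.card G.B ≤ Fintype.card H.B :=
    calc Fintype.card G.B = (Finset.univ.image g).card := hcB.symm
      _ ≤ (Finset.univ : Finset H.B).card := Finset.card_image_le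
      _ = Fintype.card H.B := Finset.card_univ
  have hAeq : Fintype.card H.A = Fintype.card G.A := by omega
  have hBeq : Fintype.card H.B = Fintype.card G.B := by omega
  have hf : Function.Injective f := by
    have : (Finset.univ.image f).card = (Finset.univ : Finset H.A).card := by
      rw [hcA, Finset.card_univ, hAeq]
    have := Finset.card_image_iff.mp this
    rw [Finset.coe_univ] at this
    exact Set.injOn_univ.mp this
  have hg : Function.Injective g := by
    have : (Finset.univ.image g).card = (Finset.univ : Finset H.B).card := by
      rw [hcB, Finset.card_univ, hBeq]
    have := Finset.card_image_iff.mp this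
    rw [Finset.coe_univ] at this
    exact Set.injOn_univ.mp this
  -- equal ranges
  have hrA : Set.range f = Set.range f₀ := by
    ext x
    have := Finset.ext_iff.mp himgA x
    simpa [Finset.mem_image] using this
  have hrB : Set.range g = Set.range g₀ := by
    ext x
    have := Finset.ext_iff.mp himgB x
    simpa [Finset.mem_image] using this
  -- the equivalences
  let eA : H.A ≃ G.A :=
    (Equiv.ofInjective f hf).trans ((Equiv.setCongr hrA).trans (Equiv.ofInjective f₀ hf₀).symm)
  let eB : H.B ≃ G.B :=
    (Equiv.ofInjective g hg).trans ((Equiv.setCongr hrB).trans (Equiv.ofInjective g₀ hg₀).symm)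
  have heA : ∀ a, f₀ (eA a) = f a := by
    intro a
    have := Equiv.apply_ofInjective_symm hf₀
      ((Equiv.setCongr hrA) (Equiv.ofInjective f hf a))
    simpa [eA] using this
  have heB : ∀ b, g₀ (eB b) = g b := by
    intro b
    have := Equiv.apply_ofInjective_symm hg₀
      ((Equiv.setCongr hrB) (Equiv.ofInjective g hg b))
    simpa [eB] using this
  refine ⟨eA, eB, ?_⟩
  have hinj : Function.Injective (Prod.map f₀ g₀) := by
    rintro ⟨a, b⟩ ⟨c, d⟩ h
    simp only [Prod.map, Prod.mk.injEq] at h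
    exact Prod.ext (hf₀ h.1) (hg₀ h.2)
  apply Multiset.map_injective hinj
  rw [Multiset.map_map]
  have h1 : (Prod.map f₀ g₀ ∘ Prod.map (⇑eA) (⇑eB)) = fun e : H.A × H.B => (f e.1, g e.2) := by
    funext e
    simp [Prod.map, heA, heB]
  rw [h1, heq]
  congr 1

/-- Over a field of characteristic zero, the homomorphism polynomials of pairwise
non-isomorphic bipartite multigraphs without isolated vertices, with at most `n` left and
`m` right vertices each, are linearly independent in `K[X_{n,m}]`. -/
theorem homPoly_linearIndependent (K : Type) [Field K] [CharZero K] (n m r : ℕ)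
    (F : Fin r → BipartiteMultigraph)
    (hiso : ∀ i j : Fin r, i ≠ j → ¬ BMGIso (F i) (F j))
    (hnoiso : ∀ i, NoIsolatedVertices (F i))
    (hcard : ∀ i, Fintype.card (F i).A ≤ n ∧ Fintype.card (F i).B ≤ m) :
    LinearIndependent K (fun i : Fin r => homPoly K (F i) n m) := by
  classical
  rw [Fintype.linearIndependent_iff]
  intro c hc
  by_contra hne
  push_neg at hne
  obtain ⟨i₀, hi₀⟩ := hne
  set T : Finset (Fin r) := Finset.univ.filter (fun j => c j ≠ 0) with hT
  have hTne : T.Nonempty := ⟨i₀, by simp [hT, hi₀]⟩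
  obtain ⟨i, hiT, hmax⟩ :=
    T.exists_max_image (fun j => Fintype.card (F j).A + Fintype.card (F j).B) hTne
  have hci : c i ≠ 0 := by
    have := Finset.mem_filter.mp hiT
    exact this.2
  obtain ⟨f₀⟩ : Nonempty ((F i).A ↪ Fin n) :=
    Function.Embedding.nonempty_of_card_le (by simpa using (hcard i).1)
  obtain ⟨g₀⟩ : Nonempty ((F i).B ↪ Fin m) :=
    Function.Embedding.nonempty_of_card_le (by simpa using (hcard i).2)
  set D : Multiset (Fin n × Fin m) := (F i).edges.map (fun e => (f₀ e.1, g₀ e.2)) with hD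
  have hco := congrArg (MvPolynomial.coeff D.toFinsupp) hc
  simp only [MvPolynomial.coeff_sum, MvPolynomial.coeff_smul, MvPolynomial.coeff_zero,
    smul_eq_mul, coeff_homPoly] at hco
  rw [Finset.sum_eq_single i] at hco
  · -- c i * N i = 0 forces c i = 0
    have hmem : ((⇑f₀ : (F i).A → Fin n), (⇑g₀ : (F i).B → Fin m)) ∈
        (Finset.univ.filter fun fg : ((F i).A → Fin n) × ((F i).B → Fin m) =>
          (F i).edges.map (fun e => (fg.1 e.1, fg.2 e.2)) = D) := by
      simp [hD]
    have hpos : 0 < (Finset.univ.filter fun fg : ((F i).A → Fin n) × ((F i).B → Fin m) =>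
          (F i).edges.map (fun e => (fg.1 e.1, fg.2 e.2)) = D).card :=
      Finset.card_pos.mpr ⟨_, hmem⟩
    have hNne : ((Finset.univ.filter fun fg : ((F i).A → Fin n) × ((F i).B → Fin m) =>
          (F i).edges.map (fun e => (fg.1 e.1, fg.2 e.2)) = D).card : K) ≠ 0 :=
      Nat.cast_ne_zero.mpr hpos.ne'
    exact hci (by
      rcases mul_eq_zero.mp hco with h | h
      · exact h
      · exact absurd h hNne)
  · intro j _ hji
    by_cases hcj : c j = 0
    · rw [hcj, zero_mul]
    · -- j has nonzero coefficient; its filter must be empty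
      have hjT : j ∈ T := by simp [hT, hcj]
      have hle : Fintype.card (F j).A + Fintype.card (F j).B ≤
          Fintype.card (F i).A + Fintype.card (F i).B := hmax j hjT
      have hempty : (Finset.univ.filter fun fg : ((F j).A → Fin n) × ((F j).B → Fin m) =>
          (F j).edges.map (fun e => (fg.1 e.1, fg.2 e.2)) = D) = ∅ := by
        rw [Finset.eq_empty_iff_forall_notMem]
        rintro ⟨f, g⟩ hmem
        rw [Finset.mem_filter] at hmem
        have hiso' : BMGIso (F j) (F i) :=
          key_iso (F i) (F j) (hnoiso i) (hnoiso j) hle ⇑f₀ ⇑g₀ f₀.injective g₀.injective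
            f g (by simpa [hD] using hmem.2)
        exact hiso j i hji hiso'
      rw [hempty]
      simp
  · intro h
    exact absurd (Finset.mem_univ i) h
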